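/- Let C = γ ∘ σ where σ : I → J is Cⁿ with σ' > 0 and γ : J → ℝⁿ is n-times differentiable. Then det(C'(t),…,C⁽ⁿ⁾(t)) = σ'(t)^(n(n+1)/2) · det(γ'(σ(t)),…,γ⁽ⁿ⁾(σ(t))). -/

import Mathlib

noncomputable def frameD (n : ℕ) (C : ℝ → Fin n → ℝ) (t : ℝ) : Matrix (Fin n) (Fin n) ℝ :=
  Matrix.of fun i j => iteratedDeriv (j.1 + 1) C t i

open Finset

lemma natle {a b : ℕ} (h : a ≤ b) : (a : WithTop ℕ∞) ≤ (b : WithTop ℕ∞) := by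
  exact_mod_cast h

lemma natlt {a b : ℕ} (h : a < b) : (a : WithTop ℕ∞) < (b : WithTop ℕ∞) := by
  exact_mod_cast h

noncomputable def qc (σ : ℝ → ℝ) : ℕ → ℕ → ℝ → ℝ
  | 0, 0 => fun _ => 1
  | 0, _ + 1 => fun _ => 0
  | m + 1, 0 => deriv (qc σ m 0)
  | m + 1, k + 1 => fun t => deriv (qc σ m (k + 1)) t + deriv σ t * qc σ m k t

lemma qc_vanish (σ : ℝ → ℝ) : ∀ m k, m < k → qc σ m k = fun _ => 0 := by
  intro m
  induction m with
  | zero => intro k hk; match k, hk with | k + 1, _ => rfl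
  | succ m ih =>
    intro k hk
    match k, hk with
    | k + 1, hk =>
      have h1 : qc σ m (k + 1) = fun _ => 0 := ih _ (by omega)
      have h2 : qc σ m k = fun _ => 0 := ih _ (by omega)
      show (fun t => deriv (qc σ m (k + 1)) t + deriv σ t * qc σ m k t) = fun _ => 0
      funext t
      simp [h1, h2]

lemma qc_zero (σ : ℝ → ℝ) : ∀ m, qc σ (m + 1) 0 = fun _ => 0 := by
  intro m
  induction m with
  | zero =>
    show deriv (qc σ 0 0) = fun _ => 0
    funext t
    show deriv (fun _ : ℝ => (1 : ℝ)) t = 0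
    simp
  | succ m ih =>
    show deriv (qc σ (m + 1) 0) = fun _ => 0
    rw [ih]
    funext t; simp

lemma qc_diag (σ : ℝ → ℝ) : ∀ m, qc σ m m = fun t => (deriv σ t) ^ m := by
  intro m
  induction m with
  | zero => funext t; simp [qc]
  | succ m ih =>
    show (fun t => deriv (qc σ m (m + 1)) t + deriv σ t * qc σ m m t) = _
    rw [qc_vanish σ m (m + 1) (by omega), ih]
    funext t
    simp [pow_succ, mul_comm]

lemma qc_contDiff (σ : ℝ → ℝ) (n : ℕ) (hσ : ContDiff ℝ n σ) :
    ∀ m, m ≤ n → ∀ k, ContDiff ℝ ((n - m : ℕ)) (qc σ m k) := by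
  intro m
  induction m with
  | zero =>
    intro _ k
    match k with
    | 0 => exact contDiff_const
    | k + 1 => exact contDiff_const
  | succ m ih =>
    intro hm k
    have hcast : ((n - m : ℕ) : WithTop ℕ∞) = ((n - (m + 1) : ℕ) : WithTop ℕ∞) + 1 := by
      rw [show n - m = (n - (m + 1)) + 1 by omega]; push_cast; ring
    have hstep : ∀ j, ContDiff ℝ ((n - (m + 1) : ℕ)) (deriv (qc σ m j)) := by
      intro j
      have := ih (by omega) j
      rw [hcast, contDiff_succ_iff_deriv] at this
      exact this.2.2
    have hσ' : ContDiff ℝ ((n - (m + 1) : ℕ)) (deriv σ) := by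
      have : ContDiff ℝ (((n - (m + 1) : ℕ) : WithTop ℕ∞) + 1) σ := by
        apply hσ.of_le
        rw [← hcast]
        exact natle (by omega)
      rw [contDiff_succ_iff_deriv] at this
      exact this.2.2
    match k with
    | 0 => exact hstep 0
    | k + 1 =>
      show ContDiff ℝ _ (fun t => deriv (qc σ m (k + 1)) t + deriv σ t * qc σ m k t)
      exact (hstep (k + 1)).add (hσ'.mul ((ih (by omega) k).of_le (natle (by omega))))

lemma key (σ : ℝ → ℝ) (n : ℕ) (hσ : ContDiff ℝ n σ)
    {F : Type*} [NormedAddCommGroup F] [NormedSpace ℝ F]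
    (γ : ℝ → F) (hγ : ContDiff ℝ n γ) :
    ∀ m, m ≤ n → ∀ t, iteratedDeriv m (γ ∘ σ) t =
      ∑ k ∈ range (m + 1), qc σ m k t • iteratedDeriv k γ (σ t) := by
  intro m
  induction m with
  | zero =>
    intro _ t
    simp [qc]
  | succ m ih =>
    intro hm t
    have hfun : iteratedDeriv m (γ ∘ σ) =
        fun s => ∑ k ∈ range (m + 1), qc σ m k s • iteratedDeriv k γ (σ s) :=
      funext (ih (by omega))
    have hσd : HasDerivAt σ (deriv σ t) t :=
      ((hσ.differentiable (by exact_mod_cast (show n ≠ 0 by omega))) t).hasDerivAt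
    have hterm : ∀ k ∈ range (m + 1), HasDerivAt
        (fun s => qc σ m k s • iteratedDeriv k γ (σ s))
        (qc σ m k t • (deriv σ t • iteratedDeriv (k + 1) γ (σ t)) +
          deriv (qc σ m k) t • iteratedDeriv k γ (σ t)) t := by
      intro k hk
      rw [mem_range] at hk
      have hq : HasDerivAt (qc σ m k) (deriv (qc σ m k) t) t := by
        have := qc_contDiff σ n hσ m (by omega) k
        exact ((this.differentiable (by exact_mod_cast (show n - m ≠ 0 by omega))) t).hasDerivAt
      have hD : HasDerivAt (iteratedDeriv k γ) (iteratedDeriv (k + 1) γ (σ t)) (σ t) := by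
        have hd := (hγ.differentiable_iteratedDeriv k (natlt (show k < n by omega))) (σ t)
        rw [iteratedDeriv_succ]
        exact hd.hasDerivAt
      have hcomp : HasDerivAt (iteratedDeriv k γ ∘ σ)
          (deriv σ t • iteratedDeriv (k + 1) γ (σ t)) t := HasDerivAt.scomp (h := σ) (x := t) hD hσd
      exact hq.smul hcomp
    have hsum := HasDerivAt.fun_sum hterm
    rw [iteratedDeriv_succ, hfun, hsum.deriv]
    -- algebra
    rw [Finset.sum_add_distrib]
    rw [Finset.sum_range_succ' (fun k => qc σ (m + 1) k t • iteratedDeriv k γ (σ t)) (m + 1)]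
    have h0 : qc σ (m + 1) 0 t • iteratedDeriv 0 γ (σ t) =
        deriv (qc σ m 0) t • iteratedDeriv 0 γ (σ t) := rfl
    have hsucc : ∀ j, qc σ (m + 1) (j + 1) t = deriv (qc σ m (j + 1)) t + deriv σ t * qc σ m j t :=
      fun j => rfl
    rw [h0]
    simp only [hsucc, add_smul]
    rw [Finset.sum_add_distrib]
    have e1 : ∑ k ∈ range (m + 1), qc σ m k t • (deriv σ t • iteratedDeriv (k + 1) γ (σ t)) =
        ∑ k ∈ range (m + 1), (deriv σ t * qc σ m k t) • iteratedDeriv (k + 1) γ (σ t) := by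
      apply Finset.sum_congr rfl
      intro k _
      rw [smul_smul, mul_comm]
    have e2 : ∑ k ∈ range (m + 1), deriv (qc σ m k) t • iteratedDeriv k γ (σ t) =
        (∑ k ∈ range (m + 1), deriv (qc σ m (k + 1)) t • iteratedDeriv (k + 1) γ (σ t)) +
          deriv (qc σ m 0) t • iteratedDeriv 0 γ (σ t) := by
      rw [Finset.sum_range_succ' (fun k => deriv (qc σ m k) t • iteratedDeriv k γ (σ t)) m,
        Finset.sum_range_succ
          (fun k => deriv (qc σ m (k + 1)) t • iteratedDeriv (k + 1) γ (σ t)) m,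
        qc_vanish σ m (m + 1) (by omega)]
      simp
    rw [e1, e2]
    abel


lemma gauss_sum (n : ℕ) : ∑ j ∈ range n, (j + 1) = n * (n + 1) / 2 := by
  have h : (∑ i ∈ range (n + 1), i) * 2 = n * (n + 1) := by
    rw [Finset.sum_range_id_mul_two]
    simp [Nat.mul_comm]
  have h2 : ∑ i ∈ range (n + 1), i = ∑ j ∈ range n, (j + 1) + 0 :=
    Finset.sum_range_succ' (fun i => i) n
  omega


theorem det_frame_reparam (n : ℕ) (σ : ℝ → ℝ) (hσ : ContDiff ℝ n σ)
    (hσ' : ∀ t, 0 < deriv σ t) (γ : ℝ → Fin n → ℝ) (hγ : ContDiff ℝ n γ) :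
    ∀ t, (frameD n (γ ∘ σ) t).det =
      (deriv σ t) ^ (n * (n + 1) / 2) * (frameD n γ (σ t)).det := by
  intro t
  set G := frameD n γ (σ t) with hG
  set B : Matrix (Fin n) (Fin n) ℝ :=
    Matrix.of (fun k j : Fin n => qc σ (j.1 + 1) (k.1 + 1) t) with hB
  have hM : frameD n (γ ∘ σ) t = G * B := by
    ext i j
    show iteratedDeriv (j.1 + 1) (γ ∘ σ) t i = ∑ k : Fin n, G i k * B k j
    rw [key σ n hσ γ hγ (j.1 + 1) (by omega) t]
    have : (∑ k ∈ range (j.1 + 2), qc σ (j.1 + 1) k t • iteratedDeriv k γ (σ t)) i =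
        ∑ k ∈ range (j.1 + 2), qc σ (j.1 + 1) k t * iteratedDeriv k γ (σ t) i := by
      rw [Finset.sum_apply]; rfl
    rw [this, Finset.sum_range_succ'
      (fun k => qc σ (j.1 + 1) k t * iteratedDeriv k γ (σ t) i) (j.1 + 1)]
    rw [qc_zero σ j.1]
    simp only [zero_mul, add_zero]
    have hsub : ∑ k ∈ range (j.1 + 1),
        qc σ (j.1 + 1) (k + 1) t * iteratedDeriv (k + 1) γ (σ t) i =
        ∑ k ∈ range n, qc σ (j.1 + 1) (k + 1) t * iteratedDeriv (k + 1) γ (σ t) i := by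
      apply Finset.sum_subset (Finset.range_subset_range.mpr (by omega))
      intro k _ hk
      rw [Finset.mem_range, not_lt] at hk
      rw [qc_vanish σ (j.1 + 1) (k + 1) (by omega)]
      simp
    rw [hsub, ← Fin.sum_univ_eq_sum_range
      (fun k => qc σ (j.1 + 1) (k + 1) t * iteratedDeriv (k + 1) γ (σ t) i) n]
    apply Finset.sum_congr rfl
    intro k _
    show _ = iteratedDeriv (k.1 + 1) γ (σ t) i * qc σ (j.1 + 1) (k.1 + 1) t
    ring
  rw [hM, Matrix.det_mul]
  have hBtri : B.BlockTriangular id := by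
    intro k j hkj
    show qc σ (j.1 + 1) (k.1 + 1) t = 0
    rw [qc_vanish σ (j.1 + 1) (k.1 + 1) (by exact_mod_cast (by
      simpa using Nat.add_lt_add_right (show j.1 < k.1 from hkj) 1))]
  have hdetB : B.det = (deriv σ t) ^ (n * (n + 1) / 2) := by
    rw [Matrix.det_of_upperTriangular hBtri]
    have : ∀ j : Fin n, B j j = (deriv σ t) ^ (j.1 + 1) := by
      intro j
      show qc σ (j.1 + 1) (j.1 + 1) t = _
      rw [qc_diag σ (j.1 + 1)]
    rw [Finset.prod_congr rfl (fun j _ => this j)]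
    rw [Finset.prod_pow_eq_pow_sum]
    congr 1
    rw [Fin.sum_univ_eq_sum_range (fun j => j + 1) n]
    exact gauss_sum n
  rw [hdetB]
  ring
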